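/- Let X = (X_1,…,X_d) be a random vector on a probability space. If X is positive supermodular associated, then X is positive upper orthant dependent: for all t_1,…,t_d ∈ ℝ, P(X_1 > t_1, …, X_d > t_d) ≥ ∏_{i=1}^d P(X_i > t_i). -/

import Mathlib

open MeasureTheory

namespace PSAaux

/-- Indicator of the upper orthant determined by coordinates in `S`. -/
noncomputable def F {d : ℕ} (t : Fin d → ℝ) (S : Finset (Fin d)) (x : Fin d → ℝ) : ℝ :=
  if ∀ i ∈ S, t i < x i then 1 else 0

variable {d : ℕ} {t : Fin d → ℝ} {S : Finset (Fin d)} {x y : Fin d → ℝ}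

lemma F_of_pos (h : ∀ i ∈ S, t i < x i) : F t S x = 1 := if_pos h

lemma F_of_neg (h : ¬ ∀ i ∈ S, t i < x i) : F t S x = 0 := if_neg h

lemma F_nonneg : 0 ≤ F t S x := by unfold F; split_ifs <;> norm_num

lemma F_le_one : F t S x ≤ 1 := by unfold F; split_ifs <;> norm_num

lemma F_meas : Measurable (F t S) := by
  apply Measurable.ite _ measurable_const measurable_const
  have : {x : Fin d → ℝ | ∀ i ∈ S, t i < x i} = ⋂ i ∈ S, {x | t i < x i} := by
    ext x; simp
  rw [this]
  exact MeasurableSet.biInter S.countable_toSet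
    (fun i _ => measurableSet_lt measurable_const (measurable_pi_apply i))

lemma F_mono : Monotone (F t S) := by
  intro x y hxy
  by_cases hx : ∀ i ∈ S, t i < x i
  · have hy : ∀ i ∈ S, t i < y i := fun i hi => lt_of_lt_of_le (hx i hi) (hxy i)
    rw [F_of_pos hx, F_of_pos hy]
  · rw [F_of_neg hx]; exact F_nonneg

lemma F_supermod (x y : Fin d → ℝ) :
    F t S x + F t S y ≤ F t S (x ⊓ y) + F t S (x ⊔ y) := by
  by_cases hx : ∀ i ∈ S, t i < x i <;> by_cases hy : ∀ i ∈ S, t i < y i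
  · have hinf : ∀ i ∈ S, t i < (x ⊓ y) i := by
      intro i hi
      simp only [Pi.inf_apply, lt_inf_iff]
      exact ⟨hx i hi, hy i hi⟩
    have hsup : ∀ i ∈ S, t i < (x ⊔ y) i := by
      intro i hi; exact lt_of_lt_of_le (hx i hi) (le_sup_left : x i ≤ (x ⊔ y) i)
    rw [F_of_pos hx, F_of_pos hy, F_of_pos hinf, F_of_pos hsup]
  · have hsup : ∀ i ∈ S, t i < (x ⊔ y) i := by
      intro i hi; exact lt_of_lt_of_le (hx i hi) (le_sup_left : x i ≤ (x ⊔ y) i)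
    rw [F_of_pos hx, F_of_neg hy, F_of_pos hsup]
    have := F_nonneg (t := t) (S := S) (x := x ⊓ y)
    linarith
  · have hsup : ∀ i ∈ S, t i < (x ⊔ y) i := by
      intro i hi; exact lt_of_lt_of_le (hy i hi) (le_sup_right : y i ≤ (x ⊔ y) i)
    rw [F_of_neg hx, F_of_pos hy, F_of_pos hsup]
    have := F_nonneg (t := t) (S := S) (x := x ⊓ y)
    linarith
  · rw [F_of_neg hx, F_of_neg hy]
    have h1 := F_nonneg (t := t) (S := S) (x := x ⊓ y)
    have h2 := F_nonneg (t := t) (S := S) (x := x ⊔ y)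
    linarith

lemma F_bdd : ∃ C, ∀ x, |F t S x| ≤ C :=
  ⟨1, fun x => abs_le.2 ⟨by linarith [F_nonneg (t := t) (S := S) (x := x)], F_le_one⟩⟩

lemma F_mul (a : Fin d) (x : Fin d → ℝ) :
    F t S x * F t {a} x = F t (insert a S) x := by
  have hiff : (∀ i ∈ insert a S, t i < x i) ↔ (t a < x a ∧ ∀ i ∈ S, t i < x i) :=
    Finset.forall_mem_insert _ _ _
  by_cases h1 : ∀ i ∈ S, t i < x i <;> by_cases h2 : t a < x a
  · rw [F_of_pos h1, F_of_pos (by simpa using h2), F_of_pos (hiff.2 ⟨h2, h1⟩), mul_one]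
  · rw [F_of_neg (fun h => h2 (h a (Finset.mem_singleton_self a))), mul_zero,
      F_of_neg (fun h => h2 (hiff.1 h).1)]
  · rw [F_of_neg h1, zero_mul, F_of_neg (fun h => h1 (hiff.1 h).2)]
  · rw [F_of_neg h1, zero_mul, F_of_neg (fun h => h1 (hiff.1 h).2)]

end PSAaux

open PSAaux

/-- If the random vector `X = (X_1,…,X_d)` is positive supermodular associated,
then it is positive upper orthant dependent. -/
theorem PSA_implies_PUOD
    {Ω : Type*} [MeasurableSpace Ω] (P : Measure Ω) [IsProbabilityMeasure P]
    (d : ℕ) (X : Fin d → Ω → ℝ) (hX : ∀ i, Measurable (X i))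
    (PSA : ∀ f g : (Fin d → ℝ) → ℝ, Measurable f → Measurable g →
      Monotone f → Monotone g →
      (∀ x y, f x + f y ≤ f (x ⊓ y) + f (x ⊔ y)) →
      (∀ x y, g x + g y ≤ g (x ⊓ y) + g (x ⊔ y)) →
      (∃ C, ∀ x, |f x| ≤ C) → (∃ C, ∀ x, |g x| ≤ C) →
      0 ≤ (∫ ω, f (fun i => X i ω) * g (fun i => X i ω) ∂P) -
          (∫ ω, f (fun i => X i ω) ∂P) * (∫ ω, g (fun i => X i ω) ∂P)) :
    ∀ t : Fin d → ℝ, ∏ i, P {ω | t i < X i ω} ≤ P {ω | ∀ i, t i < X i ω} := by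
  intro t
  have hAmeas : ∀ S : Finset (Fin d), MeasurableSet {ω | ∀ i ∈ S, t i < X i ω} := by
    intro S
    have : {ω | ∀ i ∈ S, t i < X i ω} = ⋂ i ∈ S, {ω | t i < X i ω} := by
      ext ω; simp
    rw [this]
    exact MeasurableSet.biInter S.countable_toSet
      (fun i _ => measurableSet_lt measurable_const (hX i))
  have key : ∀ S : Finset (Fin d),
      ∫ ω, F t S (fun i => X i ω) ∂P = (P {ω | ∀ i ∈ S, t i < X i ω}).toReal := by
    intro S
    have heq : (fun ω => F t S (fun i => X i ω)) =
        Set.indicator {ω | ∀ i ∈ S, t i < X i ω} (fun _ => (1:ℝ)) := by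
      ext ω
      simp only [PSAaux.F, Set.indicator_apply, Set.mem_setOf_eq]
    rw [heq, integral_indicator_const (1:ℝ) (hAmeas S), smul_eq_mul, mul_one]
    rfl
  -- the main induction
  have main : ∀ S : Finset (Fin d),
      ∏ i ∈ S, (P {ω | t i < X i ω}).toReal ≤ (P {ω | ∀ i ∈ S, t i < X i ω}).toReal := by
    intro S
    induction S using Finset.induction_on with
    | empty => simp
    | @insert a S ha ih =>
      have hPSA := PSA (F t S) (F t {a}) F_meas F_meas F_mono F_mono
        (F_supermod) (F_supermod) F_bdd F_bdd
      have hprod : ∫ ω, F t S (fun i => X i ω) * F t {a} (fun i => X i ω) ∂P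
          = (P {ω | ∀ i ∈ insert a S, t i < X i ω}).toReal := by
        rw [show (fun ω => F t S (fun i => X i ω) * F t {a} (fun i => X i ω))
            = fun ω => F t (insert a S) (fun i => X i ω) from
            funext fun ω => F_mul a _, key]
      rw [hprod, key, key] at hPSA
      have step : (P {ω | ∀ i ∈ ({a} : Finset (Fin d)), t i < X i ω}).toReal *
          (P {ω | ∀ i ∈ S, t i < X i ω}).toReal
          ≤ (P {ω | ∀ i ∈ insert a S, t i < X i ω}).toReal := by
        nlinarith [hPSA]
      have hsingle : {ω | ∀ i ∈ ({a} : Finset (Fin d)), t i < X i ω} = {ω | t a < X a ω} := by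
        ext ω; simp
      rw [Finset.prod_insert ha]
      calc (P {ω | t a < X a ω}).toReal * ∏ i ∈ S, (P {ω | t i < X i ω}).toReal
          ≤ (P {ω | t a < X a ω}).toReal * (P {ω | ∀ i ∈ S, t i < X i ω}).toReal :=
            mul_le_mul_of_nonneg_left ih ENNReal.toReal_nonneg
        _ ≤ (P {ω | ∀ i ∈ insert a S, t i < X i ω}).toReal := by rw [← hsingle]; exact step
  have h := main Finset.univ
  have hne1 : (∏ i, P {ω | t i < X i ω}) ≠ ⊤ :=
    ENNReal.prod_ne_top (fun i _ => measure_ne_top P _)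
  have hne2 : P {ω | ∀ i, t i < X i ω} ≠ ⊤ := measure_ne_top P _
  rw [← ENNReal.toReal_le_toReal hne1 hne2, ENNReal.toReal_prod]
  simpa using h
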